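/- There exists a universal constant r₀ ∈ (0, 1/2) with the following property. For every r ∈ (0, r₀) and every integer N ≥ 1, colour the vertices of ℤ² independently at random, each vertex yellow with probability r and blue with probability 1 − r. Then with probability at least 1 − 1/N², for every pair of points x, y ∈ ([−N, N] × [−N, N]) ∩ ℤ² with Euclidean distance |x − y| ≥ log N, one has (9/10) · d_{ℤ²}(x, y) ≤ d_chem(x, y) ≤ d_{ℤ²}(x, y), where both distances are computed using only lattice paths all of whose vertices lie in [−N, N] × [−N, N]. -/

import Mathlib

open MeasureTheory

noncomputable section

/-- `p 0, p 1, …, p L` is a lattice path in `ℤ²`: consecutive points differ by a unit step. -/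
def IsLatticePath (p : ℕ → ℤ × ℤ) (L : ℕ) : Prop :=
  ∀ i < L, ((p (i+1)).1 - (p i).1).natAbs + ((p (i+1)).2 - (p i).2).natAbs = 1

/-- The point `v ∈ ℤ²` lies in the box `[−N, N] × [−N, N]`. -/
def InBox (N : ℕ) (v : ℤ × ℤ) : Prop := |v.1| ≤ (N : ℤ) ∧ |v.2| ≤ (N : ℤ)

/-- The combinatorial distance between `x, y ∈ ℤ²`, computed using only lattice paths all of
whose vertices lie in `[−N, N] × [−N, N]`. -/
def dZ (N : ℕ) (x y : ℤ × ℤ) : ℕ :=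
  sInf {L | ∃ p : ℕ → ℤ × ℤ, IsLatticePath p L ∧ p 0 = x ∧ p L = y ∧ ∀ i ≤ L, InBox N (p i)}

/-- The chemical distance between `x, y ∈ ℤ²` for the colouring `c` (`true` = yellow,
`false` = blue): the minimal number of blue vertices among `x₁, …, x_L` over lattice paths
`x = x₀, …, x_L = y` all of whose vertices lie in `[−N, N] × [−N, N]`. -/
def dChem (N : ℕ) (c : ℤ × ℤ → Bool) (x y : ℤ × ℤ) : ℕ :=
  sInf {n | ∃ (L : ℕ) (p : ℕ → ℤ × ℤ), IsLatticePath p L ∧ p 0 = x ∧ p L = y ∧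
    (∀ i ≤ L, InBox N (p i)) ∧
    n = ((Finset.Icc 1 L).filter fun i => c (p i) = false).card}

/-- The Euclidean distance between two points of `ℤ²`. -/
def euclDist (x y : ℤ × ℤ) : ℝ :=
  Real.sqrt (((x.1 - y.1 : ℤ) : ℝ)^2 + ((x.2 - y.2 : ℤ) : ℝ)^2)

open scoped ENNReal

namespace ChemAux

lemma unit_step {d : ℤ × ℤ} (h : d.1.natAbs + d.2.natAbs = 1) :
    d = (1,0) ∨ d = (-1,0) ∨ d = (0,1) ∨ d = (0,-1) := by
  obtain ⟨a, b⟩ := d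
  simp only [Prod.mk.injEq] at *
  omega

def dir : Fin 4 → ℤ × ℤ := ![(1,0), (-1,0), (0,1), (0,-1)]

def encode (d : ℤ × ℤ) : Fin 4 :=
  if d = (1,0) then 0 else if d = (-1,0) then 1 else if d = (0,1) then 2 else 3

lemma dir_encode {d : ℤ × ℤ} (h : d.1.natAbs + d.2.natAbs = 1) : dir (encode d) = d := by
  rcases unit_step h with h|h|h|h <;> subst h <;> norm_num [dir, encode] <;> rfl

/-- path length is at least the ℓ¹ distance of endpoints -/

lemma length_ge {p : ℕ → ℤ × ℤ} {L : ℕ} (hp : IsLatticePath p L) :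
    ((p L).1 - (p 0).1).natAbs + ((p L).2 - (p 0).2).natAbs ≤ L := by
  induction L with
  | zero => simp
  | succ L ih =>
    have h1 := hp L (Nat.lt_succ_self L)
    have h2 := ih (fun i hi => hp i (by omega))
    omega

def pathOf (ℓ : ℕ) (x : ℤ × ℤ) (s : Fin ℓ → Fin 4) (n : ℕ) : ℤ × ℤ :=
  x + ∑ i ∈ Finset.univ.filter (fun i : Fin ℓ => (i : ℕ) < n), dir (s i)

lemma pathOf_eq {q : ℕ → ℤ × ℤ} {ℓ : ℕ} (hq : IsLatticePath q ℓ) :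
    ∀ n ≤ ℓ, pathOf ℓ (q 0) (fun i => encode (q ((i : ℕ)+1) - q (i : ℕ))) n = q n := by
  intro n hn
  induction n with
  | zero =>
    simp [pathOf]
  | succ n ih =>
    have hn' : n < ℓ := Nat.lt_of_succ_le hn
    have hfil : Finset.univ.filter (fun i : Fin ℓ => (i:ℕ) < n+1)
        = insert (⟨n, hn'⟩ : Fin ℓ) (Finset.univ.filter (fun i : Fin ℓ => (i:ℕ) < n)) := by
      ext i
      simp only [Finset.mem_filter, Finset.mem_univ, true_and, Finset.mem_insert, Fin.ext_iff]
      omega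
    have hnot : (⟨n, hn'⟩ : Fin ℓ) ∉ Finset.univ.filter (fun i : Fin ℓ => (i:ℕ) < n) := by
      simp
    have hd : dir (encode (q (n+1) - q n)) = q (n+1) - q n := by
      apply dir_encode
      have := hq n hn'
      simpa using this
    rw [pathOf, hfil, Finset.sum_insert hnot]
    have ih' := ih (le_of_lt hn')
    rw [pathOf] at ih'
    simp only at hd ⊢
    rw [hd]
    have : q 0 + (q (n + 1) - q n + ∑ i ∈ Finset.univ.filter (fun i : Fin ℓ => (i:ℕ) < n),
        dir (encode (q ((i:ℕ)+1) - q (i:ℕ)))) =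
        (q 0 + ∑ i ∈ Finset.univ.filter (fun i : Fin ℓ => (i:ℕ) < n),
        dir (encode (q ((i:ℕ)+1) - q (i:ℕ)))) + (q (n + 1) - q n) := by ring
    rw [this, ih']
    ring

def seg (u v : ℤ) (t : ℕ) : ℤ := u + Int.sign (
  v - u) * (min t (v - u).natAbs)

lemma seg_zero (u v : ℤ) : seg u v 0 = u := by simp [seg]

lemma seg_last (u v : ℤ) {t : ℕ} (ht : (v - u).natAbs ≤ t) : seg u v t = v := by
  unfold seg
  rw [min_eq_right (by exact_mod_cast ht)]
  have := Int.sign_mul_natAbs (v - u)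
  omega

lemma seg_between (u v : ℤ) (t : ℕ) : min u v ≤ seg u v t ∧ seg u v t ≤ max u v := by
  unfold seg
  rcases Int.lt_trichotomy (v - u) 0 with h | h | h
  · rw [Int.sign_eq_neg_one_of_neg h]
    have h1 : (0:ℤ) ≤ min (t : ℤ) ((v-u).natAbs : ℤ) := by positivity
    have h2 : min (t : ℤ) ((v-u).natAbs : ℤ) ≤ ((v-u).natAbs : ℤ) := min_le_right _ _
    have h3 : ((v - u).natAbs : ℤ) = u - v := by omega
    constructor <;> [skip; skip] <;> omega
  · have hv : v = u := by omega
    subst hv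
    simp
  · rw [Int.sign_eq_one_of_pos h]
    have h1 : (0:ℤ) ≤ min (t : ℤ) ((v-u).natAbs : ℤ) := by positivity
    have h2 : min (t : ℤ) ((v-u).natAbs : ℤ) ≤ ((v-u).natAbs : ℤ) := min_le_right _ _
    have h3 : ((v - u).natAbs : ℤ) = v - u := by omega
    constructor <;> omega

lemma seg_step (u v : ℤ) {t : ℕ} (ht : t < (v - u).natAbs) :
    (seg u v (t+1) - seg u v t).natAbs = 1 := by
  unfold seg
  have hne : v - u ≠ 0 := by omega
  have h1 : min ((t:ℕ)+1 : ℕ) (v-u).natAbs = t + 1 := by omega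
  have h2 : min t (v-u).natAbs = t := by omega
  rw [h1, h2]
  have : (u + (v-u).sign * ((t:ℕ)+1 : ℕ) - (u + (v-u).sign * t)) = (v-u).sign := by
    push_cast; ring
  rw [this, Int.natAbs_sign_of_ne_zero hne]

lemma path_exists {N : ℕ} {x y : ℤ × ℤ} (hx : InBox N x) (hy : InBox N y) :
    ∃ (L : ℕ) (p : ℕ → ℤ × ℤ), IsLatticePath p L ∧ p 0 = x ∧ p L = y ∧
      (∀ i ≤ L, InBox N (p i)) := by
  set a := (y.1 - x.1).natAbs with ha
  set b := (y.2 - x.2).natAbs with hb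
  refine ⟨a + b, fun i => (seg x.1 y.1 i, seg x.2 y.2 (i - a)), ?_, ?_, ?_, ?_⟩
  · intro i hi
    simp only
    by_cases hia : i < a
    · have e1 : (i + 1 - a : ℕ) = 0 := by omega
      have e2 : (i - a : ℕ) = 0 := by omega
      rw [e1, e2]
      have := seg_step x.1 y.1 (t := i) (by omega)
      simp [this]
    · have e1 : seg x.1 y.1 (i+1) = y.1 := seg_last _ _ (by omega)
      have e2 : seg x.1 y.1 i = y.1 := seg_last _ _ (by omega)
      have e3 : (i + 1 - a : ℕ) = (i - a) + 1 := by omega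
      rw [e1, e2, e3]
      have := seg_step x.2 y.2 (t := i - a) (by omega)
      simp [this]
  · simp [seg_zero]
  · simp only
    rw [seg_last _ _ (by omega), seg_last _ _ (by omega)]
  · intro i hi
    have h1 := seg_between x.1 y.1 i
    have h2 := seg_between x.2 y.2 (i - a)
    obtain ⟨hx1, hx2⟩ := hx
    obtain ⟨hy1, hy2⟩ := hy
    rw [abs_le] at hx1 hx2 hy1 hy2
    constructor
    · simp only
      rw [abs_le]
      omega
    · simp only
      rw [abs_le]
      omega

lemma loop_erase {N : ℕ} (c : ℤ × ℤ → Bool) :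
    ∀ (L : ℕ) (p : ℕ → ℤ × ℤ), IsLatticePath p L → (∀ i ≤ L, InBox N (p i)) →
    ∃ (ℓ : ℕ) (q : ℕ → ℤ × ℤ), ℓ ≤ L ∧ IsLatticePath q ℓ ∧ q 0 = p 0 ∧ q ℓ = p L ∧
      (∀ i ≤ ℓ, InBox N (q i)) ∧ Set.InjOn q (Set.Iic ℓ) ∧
      ((Finset.Icc 1 ℓ).filter fun i => c (q i) = false).card ≤
        ((Finset.Icc 1 L).filter fun i => c (p i) = false).card := by
  intro L
  induction L using Nat.strong_induction_on with
  | _ L IH =>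
    intro p hp hbox
    by_cases hinj : Set.InjOn p (Set.Iic L)
    · exact ⟨L, p, le_refl _, hp, rfl, rfl, hbox, hinj, le_refl _⟩
    · rw [Set.InjOn] at hinj
      push_neg at hinj
      obtain ⟨a', ha', b', hb', hab', hne'⟩ := hinj
      simp only [Set.mem_Iic] at ha' hb'
      -- wlog a < b
      obtain ⟨a, b, hab, hbL, heq⟩ : ∃ a b : ℕ, a < b ∧ b ≤ L ∧ p a = p b := by
        rcases Nat.lt_or_ge a' b' with h | h
        · exact ⟨a', b', h, hb', hab'⟩
        · exact ⟨b', a', by omega, ha', hab'.symm⟩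
      set L' := L - (b - a) with hL'
      have hL'lt : L' < L := by omega
      set p' : ℕ → ℤ × ℤ := fun k => if k ≤ a then p k else p (k + (b - a)) with hp'
      have hp'val : ∀ k, p' k = if k ≤ a then p k else p (k + (b - a)) := fun k => rfl
      have hpath' : IsLatticePath p' L' := by
        intro k hk
        rcases Nat.lt_trichotomy k a with h | h | h
        · have e1 : p' k = p k := by
            rw [hp'val k, if_pos (show k ≤ a by omega)]
          have e2 : p' (k+1) = p (k+1) := by
            rw [hp'val (k+1), if_pos (show k+1 ≤ a by omega)]
          rw [e1, e2]
          exact hp k (by omega)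
        · have e1 : p' k = p b := by
            rw [hp'val k, if_pos (show k ≤ a by omega), h, heq]
          have e2 : p' (k+1) = p (b+1) := by
            rw [hp'val (k+1), if_neg (show ¬ k+1 ≤ a by omega)]
            congr 1
            omega
          rw [e1, e2]
          exact hp b (by omega)
        · have e1 : p' k = p (k + (b - a)) := by
            rw [hp'val k, if_neg (show ¬ k ≤ a by omega)]
          have e2 : p' (k+1) = p ((k + (b - a)) + 1) := by
            rw [hp'val (k+1), if_neg (show ¬ k+1 ≤ a by omega)]
            congr 1
            omega
          rw [e1, e2]
          exact hp (k + (b - a)) (by omega)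
      have hbox' : ∀ i ≤ L', InBox N (p' i) := by
        intro i hi
        rw [hp'val i]
        split_ifs with h
        · exact hbox i (by omega)
        · exact hbox (i + (b - a)) (by omega)
      have hzero : p' 0 = p 0 := by rw [hp'val 0, if_pos (by omega)]
      have hlast : p' L' = p L := by
        rw [hp'val L']
        split_ifs with h
        · have e1 : L' = a := by omega
          have e2 : b = L := by omega
          rw [e1, heq, e2]
        · have e : L' + (b - a) = L := by omega
          rw [e]
      have hcard' : ((Finset.Icc 1 L').filter fun i => c (p' i) = false).card ≤
          ((Finset.Icc 1 L).filter fun i => c (p i) = false).card := by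
        apply Finset.card_le_card_of_injOn (fun k => if k ≤ a then k else k + (b - a))
        · intro k hk
          simp only [Finset.mem_coe, Finset.mem_filter, Finset.mem_Icc] at hk ⊢
          obtain ⟨⟨hk1, hk2⟩, hk3⟩ := hk
          rw [hp'val k] at hk3
          by_cases h : k ≤ a
          · rw [if_pos h] at hk3
            simp only [if_pos h]
            exact ⟨⟨hk1, by omega⟩, hk3⟩
          · rw [if_neg h] at hk3
            simp only [if_neg h]
            exact ⟨⟨by omega, by omega⟩, hk3⟩
        · intro k1 h1 k2 h2 he
          simp only [Finset.coe_filter, Set.mem_setOf_eq, Finset.mem_Icc] at h1 h2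
          simp only at he
          split_ifs at he <;> omega
      obtain ⟨ℓ, q, h1, h2, h3, h4, h5, h6, h7⟩ := IH L' hL'lt p' hpath' hbox'
      exact ⟨ℓ, q, by omega, h2, by rw [h3, hzero], by rw [h4, hlast], h5, h6,
        le_trans h7 hcard'⟩

lemma dZ_nonempty {N : ℕ} {x y : ℤ × ℤ} (hx : InBox N x) (hy : InBox N y) :
    {L | ∃ p : ℕ → ℤ × ℤ, IsLatticePath p L ∧ p 0 = x ∧ p L = y ∧
      ∀ i ≤ L, InBox N (p i)}.Nonempty := by
  obtain ⟨L, p, h1, h2, h3, h4⟩ := path_exists hx hy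
  exact ⟨L, p, h1, h2, h3, h4⟩

lemma dZ_spec {N : ℕ} {x y : ℤ × ℤ} (hx : InBox N x) (hy : InBox N y) :
    ∃ p : ℕ → ℤ × ℤ, IsLatticePath p (dZ N x y) ∧ p 0 = x ∧ p (dZ N x y) = y ∧
      ∀ i ≤ dZ N x y, InBox N (p i) :=
  Nat.sInf_mem (dZ_nonempty hx hy)

lemma dZ_le {N : ℕ} {x y : ℤ × ℤ} {L : ℕ} {p : ℕ → ℤ × ℤ} (h1 : IsLatticePath p L)
    (h2 : p 0 = x) (h3 : p L = y) (h4 : ∀ i ≤ L, InBox N (p i)) : dZ N x y ≤ L :=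
  Nat.sInf_le ⟨p, h1, h2, h3, h4⟩

lemma dChem_le {N : ℕ} {c : ℤ × ℤ → Bool} {x y : ℤ × ℤ} {L : ℕ} {p : ℕ → ℤ × ℤ}
    (h1 : IsLatticePath p L) (h2 : p 0 = x) (h3 : p L = y) (h4 : ∀ i ≤ L, InBox N (p i)) :
    dChem N c x y ≤ ((Finset.Icc 1 L).filter fun i => c (p i) = false).card :=
  Nat.sInf_le ⟨L, p, h1, h2, h3, h4, rfl⟩

lemma dChem_spec {N : ℕ} {c : ℤ × ℤ → Bool} {x y : ℤ × ℤ} (hx : InBox N x) (hy : InBox N y) :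
    ∃ (L : ℕ) (p : ℕ → ℤ × ℤ), IsLatticePath p L ∧ p 0 = x ∧ p L = y ∧
      (∀ i ≤ L, InBox N (p i)) ∧
      dChem N c x y = ((Finset.Icc 1 L).filter fun i => c (p i) = false).card := by
  have hne : {n | ∃ (L : ℕ) (p : ℕ → ℤ × ℤ), IsLatticePath p L ∧ p 0 = x ∧ p L = y ∧
      (∀ i ≤ L, InBox N (p i)) ∧
      n = ((Finset.Icc 1 L).filter fun i => c (p i) = false).card}.Nonempty := by
    obtain ⟨L, p, h1, h2, h3, h4⟩ := path_exists hx hy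
    exact ⟨_, L, p, h1, h2, h3, h4, rfl⟩
  exact Nat.sInf_mem hne

lemma dChem_le_dZ {N : ℕ} (c : ℤ × ℤ → Bool) {x y : ℤ × ℤ} (hx : InBox N x) (hy : InBox N y) :
    dChem N c x y ≤ dZ N x y := by
  obtain ⟨p, h1, h2, h3, h4⟩ := dZ_spec hx hy
  calc dChem N c x y ≤ ((Finset.Icc 1 (dZ N x y)).filter fun i => c (p i) = false).card :=
        dChem_le h1 h2 h3 h4
    _ ≤ (Finset.Icc 1 (dZ N x y)).card := Finset.card_filter_le _ _
    _ = dZ N x y := by rw [Nat.card_Icc]; omega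

lemma euclDist_le_l1 (x y : ℤ × ℤ) :
    euclDist x y ≤ ((y.1 - x.1).natAbs : ℝ) + ((y.2 - x.2).natAbs : ℝ) := by
  unfold euclDist
  rw [show ((x.1 - y.1 : ℤ) : ℝ) = -((y.1 - x.1 : ℤ) : ℝ) by push_cast; ring,
      show ((x.2 - y.2 : ℤ) : ℝ) = -((y.2 - x.2 : ℤ) : ℝ) by push_cast; ring]
  have h1 : ((y.1 - x.1).natAbs : ℝ) = |((y.1 - x.1 : ℤ) : ℝ)| := by
    rw [Nat.cast_natAbs]; push_cast; ring_nf
  have h2 : ((y.2 - x.2).natAbs : ℝ) = |((y.2 - x.2 : ℤ) : ℝ)| := by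
    rw [Nat.cast_natAbs]; push_cast; ring_nf
  rw [h1, h2]
  set u := ((y.1 - x.1 : ℤ) : ℝ)
  set v := ((y.2 - x.2 : ℤ) : ℝ)
  have : (-u)^2 + (-v)^2 ≤ (|u| + |v|)^2 := by
    have := abs_nonneg u
    have := abs_nonneg v
    nlinarith [sq_abs u, sq_abs v, mul_nonneg (abs_nonneg u) (abs_nonneg v)]
  calc Real.sqrt ((-u)^2 + (-v)^2) ≤ Real.sqrt ((|u| + |v|)^2) := Real.sqrt_le_sqrt this
    _ = |u| + |v| := Real.sqrt_sq (by positivity)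

lemma euclDist_le_dZ {N : ℕ} {x y : ℤ × ℤ} (hx : InBox N x) (hy : InBox N y) :
    euclDist x y ≤ (dZ N x y : ℝ) := by
  obtain ⟨p, h1, h2, h3, h4⟩ := dZ_spec hx hy
  have := length_ge h1
  rw [h2, h3] at this
  calc euclDist x y ≤ ((y.1 - x.1).natAbs : ℝ) + ((y.2 - x.2).natAbs : ℝ) := euclDist_le_l1 x y
    _ ≤ (dZ N x y : ℝ) := by exact_mod_cast this

lemma bad_witness {N : ℕ} {c : ℤ × ℤ → Bool} {x y : ℤ × ℤ} (hx : InBox N x) (hy : InBox N y)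
    (hlog : Real.log N ≤ euclDist x y)
    (hbad : ¬ ((9/10 : ℝ) * (dZ N x y : ℝ) ≤ (dChem N c x y : ℝ))) :
    ∃ (ℓ : ℕ) (q : ℕ → ℤ × ℤ), Real.log N ≤ (ℓ : ℝ) ∧ IsLatticePath q ℓ ∧
      (∀ i ≤ ℓ, InBox N (q i)) ∧ Set.InjOn q (Set.Iic ℓ) ∧
      ℓ < 10 * ((Finset.Icc 1 ℓ).filter fun i => c (q i) = true).card := by
  push_neg at hbad
  obtain ⟨L, p, h1, h2, h3, h4, h5⟩ := dChem_spec (c := c) hx hy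
  obtain ⟨ℓ, q, hl1, hl2, hl3, hl4, hl5, hl6, hl7⟩ := loop_erase c L p h1 h4
  rw [h2] at hl3
  rw [h3] at hl4
  -- blue count of q ≤ dChem
  have hblue : ((Finset.Icc 1 ℓ).filter fun i => c (q i) = false).card ≤ dChem N c x y := by
    rw [h5]; exact hl7
  have hdZℓ : dZ N x y ≤ ℓ := dZ_le hl2 hl3 hl4 hl5
  -- yellow + blue = ℓ
  have hsum : ((Finset.Icc 1 ℓ).filter fun i => c (q i) = true).card +
      ((Finset.Icc 1 ℓ).filter fun i => c (q i) = false).card = ℓ := by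
    have := Finset.card_filter_add_card_filter_not (s := Finset.Icc 1 ℓ)
      (p := fun i => c (q i) = true)
    rw [Nat.card_Icc] at this
    simp only [Bool.not_eq_true] at this
    omega
  -- 10 * dChem < 9 * dZ
  have hnat : 10 * dChem N c x y < 9 * dZ N x y := by
    have : (10 : ℝ) * (dChem N c x y : ℝ) < 9 * (dZ N x y : ℝ) := by linarith
    exact_mod_cast this
  refine ⟨ℓ, q, ?_, hl2, hl5, hl6, by omega⟩
  calc Real.log N ≤ euclDist x y := hlog
    _ ≤ (dZ N x y : ℝ) := euclDist_le_dZ hx hy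
    _ ≤ (ℓ : ℝ) := by exact_mod_cast hdZℓ

def BoxF (N : ℕ) : Finset (ℤ × ℤ) := Finset.Icc (-(N:ℤ), -(N:ℤ)) ((N:ℤ), (N:ℤ))

lemma mem_BoxF {N : ℕ} {v : ℤ × ℤ} : v ∈ BoxF N ↔ InBox N v := by
  simp only [BoxF, InBox, Finset.mem_Icc, Prod.le_def, abs_le]
  tauto

lemma card_BoxF (N : ℕ) : (BoxF N).card = (2*N+1) * (2*N+1) := by
  rw [BoxF, Finset.card_Icc_prod]
  simp only [Int.card_Icc]
  have : ((N:ℤ) + 1 - -(N:ℤ)).toNat = 2*N+1 := by omega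
  rw [this]

lemma measure_E_le {Ω : Type} [MeasurableSpace Ω] (P : Measure Ω)
    (C : Ω → (ℤ × ℤ) → Bool) (r : ℝ)
    (hind : ∀ (F : Finset (ℤ × ℤ)) (a : (ℤ × ℤ) → Bool),
        P {ω | ∀ v ∈ F, C ω v = a v} = ∏ v ∈ F, P {ω | C ω v = a v})
    (hmarg : ∀ v, P {ω | C ω v = true} = ENNReal.ofReal r)
    (N ℓ : ℕ) :
    P {ω | ∃ q : ℕ → ℤ × ℤ, IsLatticePath q ℓ ∧ (∀ i ≤ ℓ, InBox N (q i)) ∧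
        Set.InjOn q (Set.Iic ℓ) ∧
        ℓ < 10 * ((Finset.Icc 1 ℓ).filter fun i => C ω (q i) = true).card} ≤
      ((BoxF N).card : ℝ≥0∞) * 4^ℓ * 2^ℓ * (ENNReal.ofReal r)^(ℓ/10 + 1) := by
  set k := ℓ/10 + 1 with hk
  set ρ := ENNReal.ofReal r with hρ
  set A : (ℤ × ℤ) → (Fin ℓ → Fin 4) → Finset ℕ → Set Ω := fun x s I =>
    {ω | Set.InjOn (pathOf ℓ x s) ↑I ∧ ∀ i ∈ I, C ω (pathOf ℓ x s i) = true} with hA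
  -- covering
  have hsub : {ω | ∃ q : ℕ → ℤ × ℤ, IsLatticePath q ℓ ∧ (∀ i ≤ ℓ, InBox N (q i)) ∧
        Set.InjOn q (Set.Iic ℓ) ∧
        ℓ < 10 * ((Finset.Icc 1 ℓ).filter fun i => C ω (q i) = true).card} ⊆
      ⋃ x ∈ BoxF N, ⋃ s ∈ (Finset.univ : Finset (Fin ℓ → Fin 4)),
        ⋃ I ∈ (Finset.Icc 1 ℓ).powersetCard k, A x s I := by
    intro ω hω
    obtain ⟨q, hq1, hq2, hq3, hq4⟩ := hω
    have hY : k ≤ ((Finset.Icc 1 ℓ).filter fun i => C ω (q i) = true).card := by omega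
    obtain ⟨I, hIsub, hIcard⟩ := Finset.exists_subset_card_eq hY
    have hIcc : I ⊆ Finset.Icc 1 ℓ := hIsub.trans (Finset.filter_subset _ _)
    set s : Fin ℓ → Fin 4 := fun i => encode (q ((i : ℕ)+1) - q (i : ℕ)) with hs
    have hpq : ∀ n ≤ ℓ, pathOf ℓ (q 0) s n = q n := pathOf_eq hq1
    simp only [Set.mem_iUnion]
    refine ⟨q 0, mem_BoxF.2 (hq2 0 (Nat.zero_le _)), s, Finset.mem_univ _, I, ?_, ?_, ?_⟩
    · exact Finset.mem_powersetCard.2 ⟨hIcc, hIcard⟩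
    · intro i hi j hj hij
      simp only [Finset.coe_subset, Finset.mem_coe] at hi hj
      have hi' : i ≤ ℓ := (Finset.mem_Icc.1 (hIcc hi)).2
      have hj' : j ≤ ℓ := (Finset.mem_Icc.1 (hIcc hj)).2
      rw [hpq i hi', hpq j hj'] at hij
      exact hq3 hi' hj' hij
    · intro i hi
      have hi' : i ≤ ℓ := (Finset.mem_Icc.1 (hIcc hi)).2
      rw [hpq i hi']
      exact (Finset.mem_filter.1 (hIsub hi)).2
  -- bound on each A
  have hAle : ∀ (x : ℤ × ℤ) (s : Fin ℓ → Fin 4) (I : Finset ℕ),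
      I ∈ (Finset.Icc 1 ℓ).powersetCard k → P (A x s I) ≤ ρ ^ k := by
    intro x s I hI
    have hIcard : I.card = k := (Finset.mem_powersetCard.1 hI).2
    by_cases hinj : Set.InjOn (pathOf ℓ x s) ↑I
    · have heq : A x s I = {ω | ∀ v ∈ I.image (pathOf ℓ x s), C ω v = (fun _ => true) v} := by
        ext ω
        simp only [hA, Set.mem_setOf_eq]
        constructor
        · rintro ⟨-, h⟩ v hv
          obtain ⟨i, hi, rfl⟩ := Finset.mem_image.1 hv
          exact h i hi
        · intro h
          exact ⟨hinj, fun i hi => h _ (Finset.mem_image_of_mem _ hi)⟩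
      rw [heq, hind]
      have : ∀ v ∈ I.image (pathOf ℓ x s), P {ω | C ω v = (fun _ => true) v} = ρ :=
        fun v _ => hmarg v
      rw [Finset.prod_congr rfl this, Finset.prod_const,
        Finset.card_image_of_injOn hinj, hIcard]
    · have : A x s I = ∅ := by
        rw [Set.eq_empty_iff_forall_notMem]
        rintro ω ⟨h, -⟩
        exact hinj h
      rw [this]
      simp
  -- chain
  calc P _ ≤ P (⋃ x ∈ BoxF N, ⋃ s ∈ (Finset.univ : Finset (Fin ℓ → Fin 4)),
        ⋃ I ∈ (Finset.Icc 1 ℓ).powersetCard k, A x s I) := measure_mono hsub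
    _ ≤ ∑ x ∈ BoxF N, P (⋃ s ∈ (Finset.univ : Finset (Fin ℓ → Fin 4)),
        ⋃ I ∈ (Finset.Icc 1 ℓ).powersetCard k, A x s I) := measure_biUnion_finset_le _ _
    _ ≤ ∑ x ∈ BoxF N, ∑ s ∈ (Finset.univ : Finset (Fin ℓ → Fin 4)),
        P (⋃ I ∈ (Finset.Icc 1 ℓ).powersetCard k, A x s I) :=
        Finset.sum_le_sum (fun x _ => measure_biUnion_finset_le _ _)
    _ ≤ ∑ x ∈ BoxF N, ∑ s ∈ (Finset.univ : Finset (Fin ℓ → Fin 4)),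
        ∑ I ∈ (Finset.Icc 1 ℓ).powersetCard k, P (A x s I) :=
        Finset.sum_le_sum (fun x _ => Finset.sum_le_sum
          (fun s _ => measure_biUnion_finset_le _ _))
    _ ≤ ∑ x ∈ BoxF N, ∑ s ∈ (Finset.univ : Finset (Fin ℓ → Fin 4)),
        ∑ I ∈ (Finset.Icc 1 ℓ).powersetCard k, ρ ^ k :=
        Finset.sum_le_sum (fun x _ => Finset.sum_le_sum (fun s _ =>
          Finset.sum_le_sum (fun I hI => hAle x s I hI)))
    _ ≤ ∑ x ∈ BoxF N, ∑ s ∈ (Finset.univ : Finset (Fin ℓ → Fin 4)),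
        ∑ I ∈ (Finset.Icc 1 ℓ).powerset, ρ ^ k :=
        Finset.sum_le_sum (fun x _ => Finset.sum_le_sum (fun s _ =>
          Finset.sum_le_sum_of_subset
            (fun I hI => Finset.mem_powerset.2 (Finset.mem_powersetCard.1 hI).1)))
    _ = ((BoxF N).card : ℝ≥0∞) * 4^ℓ * 2^ℓ * ρ ^ k := by
        rw [Finset.sum_const, Finset.sum_const, Finset.sum_const]
        simp only [nsmul_eq_mul, Finset.card_powerset, Nat.card_Icc, Finset.card_univ,
          Fintype.card_fun, Fintype.card_fin]
        push_cast
        ring_nf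

lemma beta_le_half : ENNReal.ofReal (Real.exp (-37)) ≤ 2⁻¹ := by
  have h2 : (2:ℝ) ≤ Real.exp 1 := by
    have := Real.add_one_le_exp 1; linarith
  have h : Real.exp (-37) ≤ 2⁻¹ := by
    have h1 : Real.exp (-37) ≤ Real.exp (-1) := Real.exp_le_exp.2 (by norm_num)
    have h3 : Real.exp (-1) = (Real.exp 1)⁻¹ := by rw [Real.exp_neg]
    have h4 : (Real.exp 1)⁻¹ ≤ 2⁻¹ := by
      apply inv_anti₀ (by norm_num) h2
    linarith
  calc ENNReal.ofReal (Real.exp (-37)) ≤ ENNReal.ofReal 2⁻¹ := ENNReal.ofReal_le_ofReal h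
    _ = 2⁻¹ := by
      rw [ENNReal.ofReal_inv_of_pos (by norm_num)]
      norm_num

lemma geom_factor_le {r : ℝ} (hr : 0 < r) (hr' : r < Real.exp (-400)) (ℓ : ℕ) :
    (4:ℝ≥0∞)^ℓ * 2^ℓ * (ENNReal.ofReal r)^(ℓ/10 + 1) ≤ (ENNReal.ofReal (Real.exp (-37)))^ℓ := by
  set ρ := ENNReal.ofReal r with hρ
  have hρ1 : ρ ≤ 1 := by
    rw [hρ, ← ENNReal.ofReal_one]
    apply ENNReal.ofReal_le_ofReal
    have : Real.exp (-400) ≤ 1 := by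
      rw [← Real.exp_zero]; exact Real.exp_le_exp.2 (by norm_num)
    linarith
  have hρ0 : ρ ≠ 0 := by
    rw [hρ]; simp [ENNReal.ofReal_eq_zero]; linarith
  -- ρ^(ℓ/10+1) ≤ (ρ^(1/10 : ℝ))^ℓ
  have step1 : ρ^(ℓ/10 + 1) ≤ (ρ^((1:ℝ)/10))^ℓ := by
    have e1 : (ρ^((1:ℝ)/10))^ℓ = ρ^(((1:ℝ)/10) * ℓ) := by
      rw [← ENNReal.rpow_natCast (ρ^((1:ℝ)/10)) ℓ, ← ENNReal.rpow_mul]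
    have e2 : ρ^(ℓ/10 + 1) = ρ^(((ℓ/10 + 1 : ℕ) : ℝ)) := by
      rw [ENNReal.rpow_natCast]
    rw [e1, e2]
    apply ENNReal.rpow_le_rpow_of_exponent_ge hρ1
    have : (10 : ℝ) * (1/10 * ℓ) ≤ 10 * ((ℓ/10 + 1 : ℕ) : ℝ) := by
      push_cast
      have : (ℓ : ℝ) ≤ 10 * ((ℓ/10 : ℕ) : ℝ) + 10 := by
        have : ℓ ≤ 10 * (ℓ/10) + 10 := by omega
        exact_mod_cast this
      linarith
    linarith
  have step2 : ρ^((1:ℝ)/10) ≤ ENNReal.ofReal (Real.exp (-40)) := by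
    rw [hρ, ENNReal.ofReal_rpow_of_pos hr]
    apply ENNReal.ofReal_le_ofReal
    calc r ^ ((1:ℝ)/10) ≤ (Real.exp (-400)) ^ ((1:ℝ)/10) :=
          Real.rpow_le_rpow hr.le hr'.le (by norm_num)
      _ = Real.exp (-40) := by
          rw [Real.rpow_def_of_pos (Real.exp_pos _), Real.log_exp]
          norm_num
  calc (4:ℝ≥0∞)^ℓ * 2^ℓ * ρ^(ℓ/10 + 1) ≤ 4^ℓ * 2^ℓ * (ρ^((1:ℝ)/10))^ℓ := by
        exact mul_le_mul_right step1 _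
    _ = 8^ℓ * (ρ^((1:ℝ)/10))^ℓ := by
        rw [← mul_pow 4 2 ℓ]
        norm_num
    _ = (8 * ρ^((1:ℝ)/10))^ℓ := by
        rw [mul_pow]
    _ ≤ (ENNReal.ofReal (Real.exp (-37)))^ℓ := by
        apply pow_le_pow_left' ?_ ℓ
        calc (8:ℝ≥0∞) * ρ^((1:ℝ)/10) ≤ 8 * ENNReal.ofReal (Real.exp (-40)) :=
              mul_le_mul_right step2 _
          _ = ENNReal.ofReal (8 * Real.exp (-40)) := by
              rw [ENNReal.ofReal_mul (by norm_num)]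
              norm_num
          _ ≤ ENNReal.ofReal (Real.exp (-37)) := by
              apply ENNReal.ofReal_le_ofReal
              have h2 : (2:ℝ) ≤ Real.exp 1 := by
                have := Real.add_one_le_exp 1; linarith
              have h3 : Real.exp 3 = (Real.exp 1)^3 := by
                rw [← Real.exp_nat_mul]; norm_num
              have h23 : (2:ℝ)^3 ≤ (Real.exp 1)^3 :=
                pow_le_pow_left₀ (by norm_num) h2 3
              have h8 : (8:ℝ) ≤ Real.exp 3 := by rw [h3]; linarith [h23]
              have : Real.exp (-37) = Real.exp 3 * Real.exp (-40) := by
                rw [← Real.exp_add]; norm_num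
              nlinarith [Real.exp_pos (-40)]

lemma tail_sum_le (B : ℝ≥0∞) (m : ℕ) :
    ∑' (j : ℕ), B * (ENNReal.ofReal (Real.exp (-37)))^(m + j) ≤
      B * (ENNReal.ofReal (Real.exp (-37)))^m * 2 := by
  set β := ENNReal.ofReal (Real.exp (-37)) with hβ
  have : ∑' (j : ℕ), B * β^(m + j) = B * β^m * (1 - β)⁻¹ := by
    have e : ∀ j : ℕ, B * β^(m + j) = (B * β^m) * β^j := by
      intro j; rw [pow_add]; ring
    simp_rw [e]
    rw [ENNReal.tsum_mul_left, ENNReal.tsum_geometric]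
  rw [this]
  apply mul_le_mul_right
  have h1 : (2:ℝ≥0∞)⁻¹ ≤ 1 - β := by
    calc (2:ℝ≥0∞)⁻¹ = 1 - 2⁻¹ := ENNReal.one_sub_inv_two.symm
      _ ≤ 1 - β := tsub_le_tsub_left beta_le_half 1
  calc (1 - β)⁻¹ ≤ ((2:ℝ≥0∞)⁻¹)⁻¹ := ENNReal.inv_le_inv.2 h1
    _ = 2 := by rw [inv_inv]

lemma final_num {N : ℕ} (hN : 2 ≤ N) :
    (((2*N+1)*(2*N+1) : ℕ) : ℝ≥0∞) * (ENNReal.ofReal (Real.exp (-37)))^(⌈Real.log N⌉₊) * 2 ≤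
      ENNReal.ofReal (1/(N:ℝ)^2) := by
  set m := ⌈Real.log N⌉₊ with hmdef
  set n := (N : ℝ) with hndef
  have hn2 : (2:ℝ) ≤ n := by rw [hndef]; exact_mod_cast hN
  have hn0 : (0:ℝ) < n := by linarith
  have hm : Real.log n ≤ (m : ℝ) := Nat.le_ceil _
  -- real inequality
  have hE : Real.exp (-37)^m ≤ (n^(37:ℕ))⁻¹ := by
    have h1 : Real.exp (-37)^m = Real.exp ((m:ℝ) * (-37)) := (Real.exp_nat_mul _ m).symm
    have h2 : Real.exp ((m:ℝ) * (-37)) ≤ Real.exp (Real.log n * (-37)) := by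
      apply Real.exp_le_exp.2
      nlinarith
    have h3 : Real.exp (Real.log n * (-37)) = n ^ (-37:ℝ) := by
      rw [Real.rpow_def_of_pos hn0]
    have h4 : n ^ (-37:ℝ) = (n^(37:ℕ))⁻¹ := by
      rw [show ((-37:ℝ)) = -((37:ℕ) : ℝ) by norm_num, Real.rpow_neg hn0.le, Real.rpow_natCast]
    rw [h1]
    rw [h3, h4] at h2
    exact h2
  have hreal : (((2*N+1)*(2*N+1) : ℕ) : ℝ) * Real.exp (-37)^m * 2 ≤ 1/n^2 := by
    have hc : (((2*N+1)*(2*N+1) : ℕ) : ℝ) * 2 ≤ 18 * n^2 := by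
      push_cast
      nlinarith
    have hA : (((2*N+1)*(2*N+1) : ℕ) : ℝ) * Real.exp (-37)^m * 2 ≤ (18 * n^2) * (n^(37:ℕ))⁻¹ := by
      calc (((2*N+1)*(2*N+1) : ℕ) : ℝ) * Real.exp (-37)^m * 2
          = ((((2*N+1)*(2*N+1) : ℕ) : ℝ) * 2) * Real.exp (-37)^m := by ring
        _ ≤ (18 * n^2) * (n^(37:ℕ))⁻¹ := by
            apply mul_le_mul hc hE (by positivity) (by positivity)
    have hB : (18 * n^2) * (n^(37:ℕ))⁻¹ ≤ 1/n^2 := by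
      rw [mul_inv_le_iff₀ (by positivity : (0:ℝ) < n^(37:ℕ))]
      have h33 : (18:ℝ) ≤ n^(33:ℕ) :=
        le_trans (by norm_num) (pow_le_pow_left₀ (by norm_num) hn2 33)
      calc (18:ℝ) * n^2 ≤ n^(33:ℕ) * n^2 := mul_le_mul_of_nonneg_right h33 (by positivity)
        _ = 1/n^2 * n^(37:ℕ) := by field_simp
    linarith
  calc (((2*N+1)*(2*N+1) : ℕ) : ℝ≥0∞) * (ENNReal.ofReal (Real.exp (-37)))^m * 2
      = ENNReal.ofReal ((((2*N+1)*(2*N+1) : ℕ) : ℝ) * Real.exp (-37)^m * 2) := by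
        rw [ENNReal.ofReal_mul (by positivity), ENNReal.ofReal_mul (by positivity),
          ENNReal.ofReal_natCast, ENNReal.ofReal_pow (Real.exp_nonneg _)]
        norm_num
    _ ≤ ENNReal.ofReal (1/(n:ℝ)^2) := ENNReal.ofReal_le_ofReal hreal

end ChemAux

open ChemAux

/-- There is a universal `r₀ ∈ (0, 1/2)` such that for every `r ∈ (0, r₀)` and
`N ≥ 1`, if the vertices of `ℤ²` are coloured independently, yellow with probability `r` and blue
with probability `1 − r`, then with probability at least `1 − 1/N²`, for all
`x, y ∈ [−N,N] × [−N,N]` with `|x − y| ≥ log N` one has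
`(9/10)·d_{ℤ²}(x,y) ≤ d_chem(x,y) ≤ d_{ℤ²}(x,y)`. -/
theorem chemical_distance_comparable :
    ∃ r₀ : ℝ, 0 < r₀ ∧ r₀ < 1/2 ∧
      ∀ r : ℝ, 0 < r → r < r₀ → ∀ N : ℕ, 1 ≤ N →
      ∀ (Ω : Type) (_ : MeasurableSpace Ω) (P : Measure Ω), IsProbabilityMeasure P →
      ∀ C : Ω → (ℤ × ℤ) → Bool,
      (∀ v, Measurable fun ω => C ω v) →
      (∀ (F : Finset (ℤ × ℤ)) (a : (ℤ × ℤ) → Bool),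
        P {ω | ∀ v ∈ F, C ω v = a v} = ∏ v ∈ F, P {ω | C ω v = a v}) →
      (∀ v, P {ω | C ω v = true} = ENNReal.ofReal r) →
      ENNReal.ofReal (1 - 1/(N:ℝ)^2) ≤
        P {ω | ∀ x y : ℤ × ℤ, InBox N x → InBox N y → Real.log N ≤ euclDist x y →
          (9/10 : ℝ) * (dZ N x y : ℝ) ≤ (dChem N (C ω) x y : ℝ) ∧
            dChem N (C ω) x y ≤ dZ N x y} := by
  refine ⟨Real.exp (-400), Real.exp_pos _, ?_, ?_⟩
  · -- r₀ < 1/2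
    have h2 : (2:ℝ) ≤ Real.exp 1 := by
      have := Real.add_one_le_exp 1; linarith
    have h1 : Real.exp (-400) < Real.exp (-1) := Real.exp_lt_exp.2 (by norm_num)
    have h3 : Real.exp (-1) = (Real.exp 1)⁻¹ := Real.exp_neg 1
    have h4 : (Real.exp 1)⁻¹ ≤ 2⁻¹ := inv_anti₀ (by norm_num) h2
    rw [h3] at h1
    have : (2:ℝ)⁻¹ = 1/2 := by norm_num
    linarith
  intro r hr0 hrr N hN Ω inst P hPprob C hmeas hind hmarg
  by_cases hN1 : N = 1
  · subst hN1
    norm_num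
  have hN2 : 2 ≤ N := by omega
  set m := ⌈Real.log N⌉₊ with hmdef
  set G : Set Ω := {ω | ∀ x y : ℤ × ℤ, InBox N x → InBox N y → Real.log N ≤ euclDist x y →
          (9/10 : ℝ) * (dZ N x y : ℝ) ≤ (dChem N (C ω) x y : ℝ) ∧
            dChem N (C ω) x y ≤ dZ N x y} with hGdef
  set Ebad : ℕ → Set Ω := fun ℓ => {ω | ∃ q : ℕ → ℤ × ℤ, IsLatticePath q ℓ ∧
      (∀ i ≤ ℓ, InBox N (q i)) ∧ Set.InjOn q (Set.Iic ℓ) ∧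
      ℓ < 10 * ((Finset.Icc 1 ℓ).filter fun i => C ω (q i) = true).card} with hEdef
  have hGc : Gᶜ ⊆ ⋃ (j : ℕ), Ebad (m + j) := by
    intro ω hω
    simp only [hGdef, Set.mem_compl_iff, Set.mem_setOf_eq] at hω
    push_neg at hω
    obtain ⟨x, y, hx, hy, hlog, hfail⟩ := hω
    have hbad : ¬ ((9/10 : ℝ) * (dZ N x y : ℝ) ≤ (dChem N (C ω) x y : ℝ)) := by
      intro h
      have h1 := dChem_le_dZ (C ω) hx hy
      have h2 := hfail h
      omega
    obtain ⟨ℓ, q, hℓlog, hq1, hq2, hq3, hq4⟩ := bad_witness hx hy hlog hbad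
    have hmℓ : m ≤ ℓ := Nat.ceil_le.2 hℓlog
    refine Set.mem_iUnion.2 ⟨ℓ - m, ?_⟩
    have he : m + (ℓ - m) = ℓ := by omega
    rw [hEdef]
    simp only [Set.mem_setOf_eq, he]
    exact ⟨q, hq1, hq2, hq3, hq4⟩
  have hPbad : P Gᶜ ≤ ENNReal.ofReal (1/(N:ℝ)^2) := by
    calc P Gᶜ ≤ P (⋃ (j : ℕ), Ebad (m + j)) := measure_mono hGc
      _ ≤ ∑' (j : ℕ), P (Ebad (m + j)) := measure_iUnion_le _
      _ ≤ ∑' (j : ℕ), ((BoxF N).card : ℝ≥0∞) *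
            (ENNReal.ofReal (Real.exp (-37)))^(m + j) := by
          apply ENNReal.tsum_le_tsum
          intro j
          calc P (Ebad (m + j)) ≤ ((BoxF N).card : ℝ≥0∞) * 4^(m+j) * 2^(m+j) *
                (ENNReal.ofReal r)^((m+j)/10 + 1) := measure_E_le P C r hind hmarg N (m+j)
            _ = ((BoxF N).card : ℝ≥0∞) * (4^(m+j) * 2^(m+j) *
                (ENNReal.ofReal r)^((m+j)/10 + 1)) := by ring
            _ ≤ ((BoxF N).card : ℝ≥0∞) * (ENNReal.ofReal (Real.exp (-37)))^(m + j) :=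
                mul_le_mul_right (geom_factor_le hr0 hrr (m+j)) _
      _ ≤ ((BoxF N).card : ℝ≥0∞) * (ENNReal.ofReal (Real.exp (-37)))^m * 2 :=
          tail_sum_le _ m
      _ ≤ ENNReal.ofReal (1/(N:ℝ)^2) := by
          rw [card_BoxF]
          exact final_num hN2
  have huniv : (1:ℝ≥0∞) ≤ P G + ENNReal.ofReal (1/(N:ℝ)^2) := by
    have h0 : (1:ℝ≥0∞) = P Set.univ := (measure_univ (μ := P)).symm
    rw [h0, ← Set.union_compl_self G]
    exact le_trans (measure_union_le _ _) (add_le_add_right hPbad _)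
  have hsub : ENNReal.ofReal (1 - 1/(N:ℝ)^2) ≤ 1 - ENNReal.ofReal (1/(N:ℝ)^2) := by
    rw [ENNReal.ofReal_sub _ (by positivity), ENNReal.ofReal_one]
  exact le_trans hsub (tsub_le_iff_right.2 huniv)

end
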